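/- For every finite strategic game H, MGS^ω = MLS^ω: the outcome of iterating the global elimination of strategies strictly dominated by a mixed strategy equals the outcome of iterating the local elimination of strategies strictly dominated by a mixed strategy, both started from H. -/

import Mathlib

open Function

/-- The opponents' part of the joint strategy `t` lies in the restriction `G`. -/
def OppIn {ι : Type*} [DecidableEq ι] {σ : ι → Type*} (G : ∀ i, Set (σ i)) (i : ι) (t : ∀ j, σ j) : Prop :=
  ∀ j, j ≠ i → t j ∈ G j

/-- `s'` strictly dominates `s` on the restriction `G` (pure strategies). -/
def SDom {ι : Type*} [DecidableEq ι] {σ : ι → Type*} (p : ι → (∀ j, σ j) → ℝ) (G : ∀ i, Set (σ i))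
    (i : ι) (s' s : σ i) : Prop :=
  ∀ t : ∀ j, σ j, OppIn G i t → p i (update t i s) < p i (update t i s')

/-- `s'` weakly dominates `s` on the restriction `G` (pure strategies). -/
def WDom {ι : Type*} [DecidableEq ι] {σ : ι → Type*} (p : ι → (∀ j, σ j) → ℝ) (G : ∀ i, Set (σ i))
    (i : ι) (s' s : σ i) : Prop :=
  (∀ t : ∀ j, σ j, OppIn G i t → p i (update t i s) ≤ p i (update t i s')) ∧
  (∃ t : ∀ j, σ j, OppIn G i t ∧ p i (update t i s) < p i (update t i s'))

/-- Probability distributions over a finite type with support contained in `A`. -/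
def Mixed {α : Type*} [Fintype α] (A : Set α) : Set (α → ℝ) :=
  {m | (∀ a, 0 ≤ m a) ∧ ∑ a, m a = 1 ∧ ∀ a, m a ≠ 0 → a ∈ A}

/-- Expected payoff of player `i` using mixed strategy `m` against `t₋ᵢ`. -/
def epay {ι : Type*} [DecidableEq ι] {σ : ι → Type*} [∀ i, Fintype (σ i)]
    (p : ι → (∀ j, σ j) → ℝ) (i : ι) (m : σ i → ℝ) (t : ∀ j, σ j) : ℝ :=
  ∑ a, m a * p i (update t i a)

/-- The mixed strategy `m` strictly dominates `s` on `G`. -/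
def MSDom {ι : Type*} [DecidableEq ι] {σ : ι → Type*} [∀ i, Fintype (σ i)]
    (p : ι → (∀ j, σ j) → ℝ) (G : ∀ i, Set (σ i)) (i : ι) (m : σ i → ℝ) (s : σ i) : Prop :=
  ∀ t : ∀ j, σ j, OppIn G i t → p i (update t i s) < epay p i m t

/-- The mixed strategy `m` weakly dominates `s` on `G`. -/
def MWDom {ι : Type*} [DecidableEq ι] {σ : ι → Type*} [∀ i, Fintype (σ i)]
    (p : ι → (∀ j, σ j) → ℝ) (G : ∀ i, Set (σ i)) (i : ι) (m : σ i → ℝ) (s : σ i) : Prop :=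
  (∀ t : ∀ j, σ j, OppIn G i t → p i (update t i s) ≤ epay p i m t) ∧
  (∃ t : ∀ j, σ j, OppIn G i t ∧ p i (update t i s) < epay p i m t)

/-- Local elimination of strategies strictly dominated by a pure strategy. -/
def LS {ι : Type*} [DecidableEq ι] {σ : ι → Type*} (p : ι → (∀ j, σ j) → ℝ)
    (G : ∀ i, Set (σ i)) : ∀ i, Set (σ i) :=
  fun i => {s | s ∈ G i ∧ ¬ ∃ s' ∈ G i, SDom p G i s' s}

/-- Global elimination of strategies strictly dominated by a pure strategy. -/
def GS {ι : Type*} [DecidableEq ι] {σ : ι → Type*} (p : ι → (∀ j, σ j) → ℝ)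
    (G : ∀ i, Set (σ i)) : ∀ i, Set (σ i) :=
  fun i => {s | s ∈ G i ∧ ¬ ∃ s' : σ i, SDom p G i s' s}

/-- Local elimination of strategies weakly dominated by a pure strategy. -/
def LW {ι : Type*} [DecidableEq ι] {σ : ι → Type*} (p : ι → (∀ j, σ j) → ℝ)
    (G : ∀ i, Set (σ i)) : ∀ i, Set (σ i) :=
  fun i => {s | s ∈ G i ∧ ¬ ∃ s' ∈ G i, WDom p G i s' s}

/-- Global elimination of strategies weakly dominated by a pure strategy. -/
def GW {ι : Type*} [DecidableEq ι] {σ : ι → Type*} (p : ι → (∀ j, σ j) → ℝ)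
    (G : ∀ i, Set (σ i)) : ∀ i, Set (σ i) :=
  fun i => {s | s ∈ G i ∧ ¬ ∃ s' : σ i, WDom p G i s' s}

/-- Local elimination of strategies strictly dominated by a mixed strategy. -/
def MLS {ι : Type*} [DecidableEq ι] {σ : ι → Type*} [∀ i, Fintype (σ i)] (p : ι → (∀ j, σ j) → ℝ)
    (G : ∀ i, Set (σ i)) : ∀ i, Set (σ i) :=
  fun i => {s | s ∈ G i ∧ ¬ ∃ m ∈ Mixed (G i), MSDom p G i m s}

/-- Global elimination of strategies strictly dominated by a mixed strategy. -/
def MGS {ι : Type*} [DecidableEq ι] {σ : ι → Type*} [∀ i, Fintype (σ i)] (p : ι → (∀ j, σ j) → ℝ)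
    (G : ∀ i, Set (σ i)) : ∀ i, Set (σ i) :=
  fun i => {s | s ∈ G i ∧ ¬ ∃ m ∈ Mixed (Set.univ : Set (σ i)), MSDom p G i m s}

/-- Local elimination of strategies weakly dominated by a mixed strategy. -/
def MLW {ι : Type*} [DecidableEq ι] {σ : ι → Type*} [∀ i, Fintype (σ i)] (p : ι → (∀ j, σ j) → ℝ)
    (G : ∀ i, Set (σ i)) : ∀ i, Set (σ i) :=
  fun i => {s | s ∈ G i ∧ ¬ ∃ m ∈ Mixed (G i), MWDom p G i m s}

/-- Global elimination of strategies weakly dominated by a mixed strategy. -/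
def MGW {ι : Type*} [DecidableEq ι] {σ : ι → Type*} [∀ i, Fintype (σ i)] (p : ι → (∀ j, σ j) → ℝ)
    (G : ∀ i, Set (σ i)) : ∀ i, Set (σ i) :=
  fun i => {s | s ∈ G i ∧ ¬ ∃ m ∈ Mixed (Set.univ : Set (σ i)), MWDom p G i m s}

section Aux

variable {ι : Type*} [DecidableEq ι] [Fintype ι] {σ : ι → Type*}
    [∀ i, Fintype (σ i)] (p : ι → (∀ j, σ j) → ℝ)

lemma oppIn_mono {G G' : ∀ i, Set (σ i)} (h : G ≤ G') {i : ι} {t : ∀ j, σ j}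
    (ht : OppIn G i t) : OppIn G' i t := fun j hj => h j (ht j hj)

lemma msdom_anti {G G' : ∀ i, Set (σ i)} (h : G ≤ G') {i : ι} {m : σ i → ℝ} {s : σ i}
    (hd : MSDom p G' i m s) : MSDom p G i m s :=
  fun t ht => hd t (oppIn_mono h ht)

lemma MLS_le (G : ∀ i, Set (σ i)) : MLS p G ≤ G := fun _ _ hs => hs.1

lemma mixed_mono {α : Type*} [Fintype α] {A B : Set α} (h : A ⊆ B) {m : α → ℝ}
    (hm : m ∈ Mixed A) : m ∈ Mixed B := ⟨hm.1, hm.2.1, fun a ha => h (hm.2.2 a ha)⟩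

lemma MGS_mono : Monotone (MGS p) := by
  intro G G' h i s hs
  refine ⟨h i hs.1, ?_⟩
  rintro ⟨m, hm, hd⟩
  exact hs.2 ⟨m, hm, msdom_anti p h hd⟩

lemma MGS_le_MLS (G : ∀ i, Set (σ i)) : MGS p G ≤ MLS p G := by
  intro i s hs
  refine ⟨hs.1, ?_⟩
  rintro ⟨m, hm, hd⟩
  exact hs.2 ⟨m, mixed_mono (Set.subset_univ _) hm, hd⟩

lemma iter_le (k : ℕ) : (MGS p)^[k] (⊤ : ∀ i, Set (σ i)) ≤ (MLS p)^[k] ⊤ := by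
  induction k with
  | zero => exact le_refl _
  | succ k ih =>
      rw [iterate_succ_apply', iterate_succ_apply']
      exact le_trans (MGS_mono p ih) (MGS_le_MLS p _)

lemma exists_fix : ∃ K : ℕ, MLS p ((MLS p)^[K] (⊤ : ∀ i, Set (σ i))) = (MLS p)^[K] ⊤ ∧
    ∀ k, (MLS p)^[K] (⊤ : ∀ i, Set (σ i)) ≤ (MLS p)^[k] ⊤ := by
  classical
  set c : ℕ → ∀ i, Set (σ i) := fun k => (MLS p)^[k] ⊤ with hc
  have hanti : Antitone c := antitone_nat_of_succ_le fun k => by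
    simp only [hc, iterate_succ_apply']
    exact MLS_le p _
  have hwf : WellFoundedLT (∀ i, Set (σ i)) := Finite.to_wellFoundedLT
  obtain ⟨M, hMmem, hmin⟩ := hwf.wf.has_min (Set.range c) ⟨c 0, Set.mem_range_self 0⟩
  obtain ⟨K, rfl⟩ := hMmem
  have heq : ∀ k, K ≤ k → c k = c K := by
    intro k hk
    rcases eq_or_lt_of_le (hanti hk) with h | h
    · exact h
    · exact absurd h (hmin (c k) (Set.mem_range_self k))
  refine ⟨K, ?_, ?_⟩
  · have := heq (K + 1) (Nat.le_succ K)
    simpa only [hc, iterate_succ_apply'] using this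
  · intro k
    rcases le_total K k with h | h
    · exact (heq k h).ge
    · exact hanti h

lemma hist {K : ℕ} (hK : ∀ k, (MLS p)^[K] (⊤ : ∀ i, Set (σ i)) ≤ (MLS p)^[k] ⊤)
    {i : ι} {a : σ i} (ha : a ∉ (MLS p)^[K] (⊤ : ∀ i, Set (σ i)) i) :
    ∃ m, m ∈ Mixed (Set.univ : Set (σ i)) ∧ MSDom p ((MLS p)^[K] ⊤) i m a := by
  classical
  have hex : ∃ k, a ∉ (MLS p)^[k] (⊤ : ∀ i, Set (σ i)) i := ⟨K, ha⟩
  have hk₀ := Nat.find_spec hex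
  have hpos : Nat.find hex ≠ 0 := by
    intro h
    rw [h] at hk₀
    exact hk₀ trivial
  obtain ⟨k, hkk⟩ := Nat.exists_eq_succ_of_ne_zero hpos
  have hmem : a ∈ (MLS p)^[k] (⊤ : ∀ i, Set (σ i)) i := by
    by_contra h
    exact Nat.find_min hex (hkk ▸ Nat.lt_succ_self k) h
  rw [hkk, iterate_succ_apply'] at hk₀
  have hdom : ∃ m ∈ Mixed ((MLS p)^[k] (⊤ : ∀ i, Set (σ i)) i),
      MSDom p ((MLS p)^[k] ⊤) i m a := by
    by_contra h
    exact hk₀ ⟨hmem, h⟩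
  obtain ⟨m, hm, hd⟩ := hdom
  exact ⟨m, mixed_mono (Set.subset_univ _) hm, msdom_anti p (hK k) hd⟩

lemma epay_continuous (i : ι) (t : ∀ j, σ j) :
    Continuous (fun m : σ i → ℝ => epay p i m t) :=
  continuous_finset_sum _ fun a _ => (continuous_apply a).mul continuous_const

lemma central {L : ∀ i, Set (σ i)} (hfix : MLS p L = L)
    (hhist : ∀ (i : ι) (a : σ i), a ∉ L i →
      ∃ m, m ∈ Mixed (Set.univ : Set (σ i)) ∧ MSDom p L i m a)
    {i : ι} {s : σ i} (hs : s ∈ L i) {m₀ : σ i → ℝ}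
    (hm₀ : m₀ ∈ Mixed (Set.univ : Set (σ i))) (hd : MSDom p L i m₀ s) : False := by
  classical
  have hs' : s ∈ MLS p L i := by rw [hfix]; exact hs
  have hnodom : ¬ ∃ m ∈ Mixed (L i), MSDom p L i m s := hs'.2
  by_cases hopp : ∃ t₀, OppIn L i t₀
  · obtain ⟨t₀, ht₀⟩ := hopp
    -- compact set of candidate dominators
    set D : Set (σ i → ℝ) := Mixed (Set.univ : Set (σ i)) ∩
      {m | ∀ t, OppIn L i t → epay p i m₀ t ≤ epay p i m t} with hD
    have hMix : Mixed (Set.univ : Set (σ i)) = stdSimplex ℝ (σ i) := by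
      ext m
      constructor
      · rintro ⟨h1, h2, -⟩; exact ⟨h1, h2⟩
      · rintro ⟨h1, h2⟩; exact ⟨h1, h2, fun _ _ => trivial⟩
    have hDcomp : IsCompact D := by
      apply IsCompact.inter_right
      · rw [hMix]; exact isCompact_stdSimplex _ _
      · have : {m : σ i → ℝ | ∀ t, OppIn L i t → epay p i m₀ t ≤ epay p i m t}
            = ⋂ t, ⋂ (_ : OppIn L i t), {m | epay p i m₀ t ≤ epay p i m t} := by
          ext m; simp [Set.mem_iInter]
        rw [this]
        exact isClosed_iInter fun t => isClosed_iInter fun _ =>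
          isClosed_le continuous_const (epay_continuous p i t)
    have hDne : D.Nonempty := ⟨m₀, hm₀, fun t _ => le_refl _⟩
    obtain ⟨mstar, hmem, hmax⟩ := hDcomp.exists_isMaxOn hDne
      ((epay_continuous p i t₀).continuousOn)
    have hsupp : ∀ a, mstar a ≠ 0 → a ∈ L i := by
      intro a hane
      by_contra haL
      obtain ⟨ma, hma, hda⟩ := hhist i a haL
      have hapos : 0 < mstar a := lt_of_le_of_ne (hmem.1.1 a) (Ne.symm hane)
      set m' : σ i → ℝ := fun b => (if b = a then 0 else mstar b) + mstar a * ma b with hm'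
      have key : ∀ t, epay p i m' t
          = epay p i mstar t + mstar a * (epay p i ma t - p i (Function.update t i a)) := by
        intro t
        unfold epay
        rw [show (∑ b, m' b * p i (Function.update t i b))
            = ∑ b, (mstar b * p i (Function.update t i b)
              - (if b = a then mstar a * p i (Function.update t i a) else 0)
              + mstar a * (ma b * p i (Function.update t i b))) from
          Finset.sum_congr rfl (fun b _ => by
            by_cases h : b = a <;> simp [hm', h] <;> ring)]
        rw [Finset.sum_add_distrib, Finset.sum_sub_distrib, ← Finset.mul_sum]
        simp
        ring
      have hm'mem : m' ∈ D := by
        refine ⟨⟨fun b => ?_, ?_, fun _ _ => trivial⟩, fun t ht => ?_⟩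
        · have h1 : (0:ℝ) ≤ if b = a then 0 else mstar b := by
            split
            · exact le_refl 0
            · exact hmem.1.1 b
          exact add_nonneg h1 (mul_nonneg hapos.le (hma.1 b))
        · have : (∑ b, m' b) = (∑ b, (mstar b - if b = a then mstar a else 0))
              + mstar a * ∑ b, ma b := by
            rw [Finset.mul_sum, ← Finset.sum_add_distrib]
            refine Finset.sum_congr rfl (fun b _ => ?_)
            by_cases h : b = a <;> simp [hm', h] <;> ring
          rw [this, Finset.sum_sub_distrib, hma.2.1, hmem.1.2.1]
          simp
        · rw [key t]
          have h1 : 0 ≤ mstar a * (epay p i ma t - p i (Function.update t i a)) :=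
            mul_nonneg hapos.le (sub_nonneg.2 (hda t ht).le)
          linarith [hmem.2 t ht]
      have hstrict : epay p i mstar t₀ < epay p i m' t₀ := by
        rw [key t₀]
        have h1 : 0 < mstar a * (epay p i ma t₀ - p i (Function.update t₀ i a)) :=
          mul_pos hapos (sub_pos.2 (hda t₀ ht₀))
        linarith
      exact absurd (hmax hm'mem) (not_le.2 hstrict)
    exact hnodom ⟨mstar, ⟨hmem.1.1, hmem.1.2.1, hsupp⟩,
      fun t ht => lt_of_lt_of_le (hd t ht) (hmem.2 t ht)⟩
  · -- no opponent profiles: δ_s dominates vacuously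
    refine hnodom ⟨fun b => if b = s then 1 else 0, ⟨?_, ?_, ?_⟩, ?_⟩
    · intro b; by_cases h : b = s <;> simp [h]
    · simp
    · intro b hb
      by_cases h : b = s
      · rw [h]; exact hs
      · simp [h] at hb
    · intro t ht
      exact absurd ⟨t, ht⟩ hopp

end Aux

/-- MGS^ω = MLS^ω. -/
theorem MGS_omega_eq_MLS_omega {ι : Type*} [DecidableEq ι] [Fintype ι] {σ : ι → Type*}
    [∀ i, Fintype (σ i)] [∀ i, Nonempty (σ i)]
    (hn : 1 < Fintype.card ι) (p : ι → (∀ j, σ j) → ℝ) :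
    (⨅ k : ℕ, (MGS p)^[k] ⊤) = ⨅ k : ℕ, (MLS p)^[k] ⊤ := by
  classical
  obtain ⟨K, hfix, hK⟩ := exists_fix p
  have hLMGS : ∀ k, (MLS p)^[K] (⊤ : ∀ i, Set (σ i)) ≤ (MGS p)^[k] ⊤ := by
    intro k
    induction k with
    | zero => exact le_top
    | succ k ih =>
        rw [iterate_succ_apply']
        refine le_trans ?_ (MGS_mono p ih)
        intro i s hsL
        refine ⟨hsL, ?_⟩
        rintro ⟨m, hm, hdm⟩
        exact central p hfix (fun i a ha => hist p hK ha) hsL hm hdm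
  apply le_antisymm
  · exact le_iInf fun k => (iInf_le _ k).trans (iter_le p k)
  · exact le_iInf fun k => (iInf_le _ K).trans (hLMGS k)
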